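/- arXiv:math/0512223 — 3 statements merged into one kernel-verified Lean document; each statement's English description precedes it below -/
import Mathlib

section
/- Fix n ≥ 1 and set B = {x ∈ V_n : f^[n](x) = x}. Then B is a block of fixed points for f^[n]: B is compact and B is relatively open in the full fixed point set {x ∈ X : f^[n](x) = x}. (This is the block assertion of the paper's Theorem A.) -/
open Filter Topology Set

lemma aux_fix_limit {X : Type*} [TopologicalSpace X] [T2Space X] {g : X → X} {x p : X} {n : ℕ}
    (h : Tendsto (fun k => g^[k] x) atTop (𝓝 p)) (hx : g^[n] x = x) (hn : 1 ≤ n) : x = p := by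
  have hmul : Tendsto (fun m : ℕ => n * m) atTop atTop :=
    tendsto_atTop_atTop.2 fun b => ⟨b, fun m hm => le_trans hm (Nat.le_mul_of_pos_left m hn)⟩
  have h1 : Tendsto (fun m => g^[n * m] x) atTop (𝓝 p) := h.comp hmul
  have h2 : ∀ m, g^[n * m] x = x := fun m => by
    rw [Function.iterate_mul]; exact Function.iterate_fixed hx m
  exact tendsto_nhds_unique ((tendsto_const_nhds (f := (atTop : Filter ℕ))).congr
    fun m => (h2 m).symm) h1

/-- `iterStay f V n` is the set `V_n = {x ∈ V : f^[i] x ∈ V for i = 1, …, n-1}`. -/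
def iterStay {X : Type*} (f : X → X) (V : Set X) (n : ℕ) : Set X :=
  {x ∈ V | ∀ i : ℕ, 1 ≤ i → i ≤ n - 1 → f^[i] x ∈ V}

/-- block assertion of Theorem A: `B = Fix(f^[n]) ∩ V_n` is compact and
relatively open in the fixed point set of `f^[n]`. -/
theorem stmt1 {X : Type*} [TopologicalSpace X] [T2Space X]
    (f : X ≃ₜ X) (p : X) (hfp : f p = p)
    (Js Ju Λ V : Set X)
    (hJs : Js ⊆ {x | Tendsto (fun n => (⇑f)^[n] x) atTop (𝓝 p)})
    (hJu : Ju ⊆ {x | Tendsto (fun n => (⇑f.symm)^[n] x) atTop (𝓝 p)})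
    (hΛ : Λ = Js ∪ Ju) (hΛc : IsCompact Λ) (hpΛ : p ∈ Λ)
    (hV : IsOpen V) (hVΛ : Disjoint V Λ)
    (hDc : IsCompact (V ∪ Λ)) (hD : V ∪ Λ = closure V)
    (n : ℕ) (hn : 1 ≤ n)
    (hloc : ∃ W : Set X, IsOpen W ∧ p ∈ W ∧ ∀ x ∈ W, (⇑f)^[n] x = x → x = p) :
    IsCompact {x ∈ iterStay (⇑f) V n | (⇑f)^[n] x = x} ∧
    ∃ O : Set X, IsOpen O ∧
      {x ∈ iterStay (⇑f) V n | (⇑f)^[n] x = x} = {x | (⇑f)^[n] x = x} ∩ O := by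
  obtain ⟨W, hWo, hpW, hWfix⟩ := hloc
  have hfc : Continuous f := f.continuous
  set B := {x ∈ iterStay (⇑f) V n | (⇑f)^[n] x = x} with hB
  have hpV : p ∉ V := fun h => (hVΛ.ne_of_mem h hpΛ) rfl
  -- fixed points of f^[n] in Λ are p
  have hfixΛ : ∀ x ∈ Λ, (⇑f)^[n] x = x → x = p := by
    intro x hxΛ hx
    rw [hΛ] at hxΛ
    rcases hxΛ with hxs | hxu
    · exact aux_fix_limit (hJs hxs) hx hn
    · have hx' : (⇑f.symm)^[n] x = x := by
        conv_lhs => rw [← hx]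
        exact (Function.LeftInverse.iterate f.symm_apply_apply n) x
      exact aux_fix_limit (hJu hxu) hx' hn
  -- iterStay is open
  have hOeq : iterStay (⇑f) V n = V ∩ ⋂ i ∈ Finset.Icc 1 (n - 1), (⇑f)^[i] ⁻¹' V := by
    ext x
    simp only [iterStay, mem_setOf_eq, mem_inter_iff, mem_iInter, mem_preimage,
      Finset.mem_Icc, and_imp]
  have hOopen : IsOpen (iterStay (⇑f) V n) := by
    rw [hOeq]
    exact hV.inter (isOpen_biInter_finset fun i _ => (hfc.iterate i).isOpen_preimage V hV)
  -- p not in closure B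
  have hpB : p ∉ closure B := by
    rw [mem_closure_iff]
    push_neg
    refine ⟨W, hWo, hpW, ?_⟩
    rw [eq_empty_iff_forall_notMem]
    rintro x ⟨hxW, ⟨hxV, _⟩, hxfix⟩
    exact hpV (hWfix x hxW hxfix ▸ hxV)
  -- B is closed
  have hBclosed : IsClosed B := by
    have hFixClosed : IsClosed {x : X | (⇑f)^[n] x = x} :=
      isClosed_eq (hfc.iterate n) continuous_id
    refine isClosed_of_closure_subset ?_
    intro y hy
    have hyFix : (⇑f)^[n] y = y :=
      hFixClosed.closure_subset (closure_mono (fun x hx => hx.2) hy)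
    have hyiter : ∀ i : ℕ, i ≤ n - 1 → (⇑f)^[i] y ∈ V := by
      intro i hi
      have hmem : (⇑f)^[i] y ∈ closure V := by
        have h1 : (⇑f)^[i] y ∈ closure ((⇑f)^[i] '' B) :=
          (image_closure_subset_closure_image (hfc.iterate i)) ⟨y, hy, rfl⟩
        refine closure_mono ?_ h1
        rintro _ ⟨x, ⟨⟨hxV, hxit⟩, _⟩, rfl⟩
        rcases Nat.eq_zero_or_pos i with h0 | h0
        · simpa [h0] using hxV
        · exact hxit i h0 hi
      rw [← hD] at hmem
      rcases hmem with hmem | hmem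
      · exact hmem
      · exfalso
        have hfix' : (⇑f)^[n] ((⇑f)^[i] y) = (⇑f)^[i] y := by
          rw [← Function.iterate_add_apply, Nat.add_comm, Function.iterate_add_apply, hyFix]
        have := hfixΛ _ hmem hfix'
        have hyp : y = p := by
          have hpfix : (⇑f)^[i] p = p := Function.iterate_fixed hfp i
          have : (⇑f)^[i] y = (⇑f)^[i] p := by rw [this, hpfix]
          exact (f.toEquiv.injective.iterate i) this
        exact hpB (hyp ▸ hy)
    have hyV : y ∈ V := by simpa using hyiter 0 (Nat.zero_le _)
    exact ⟨⟨hyV, fun i hi1 hi2 => hyiter i hi2⟩, hyFix⟩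
  constructor
  · exact hDc.of_isClosed_subset hBclosed fun x hx => Or.inl hx.1.1
  · exact ⟨iterStay (⇑f) V n, hOopen, by ext x; simp only [hB, mem_setOf_eq, mem_inter_iff]; tauto⟩
end

section
/- For every n ≥ 1, the fixed point set of the n-th iterate of r∘f restricted to D equals {p} together with the n-periodic points of f whose first n−1 iterates stay in V: {x ∈ D : (r∘f)^[n](x) = x} = {p} ∪ {x ∈ V_n : f^[n](x) = x}. (Lemma 3.4 of the paper.) -/
open Set

/-- Lemma 3.4: the fixed points of `(r ∘ f)^[n]` in `D` are exactly
`p` together with the `n`-periodic points of `f` in `V_n`, where `V = D \ Λ`. -/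
theorem stmt3 {X : Type*} [TopologicalSpace X]
    (f r : X → X) (hf : Continuous f)
    (D Λ Js Ju : Set X) (hΛD : Λ ⊆ D) (hΛ : Λ = Js ∪ Ju)
    (p : X) (hp : p ∈ Js) (hfp : f p = p)
    (hJsinv : f '' Js ⊆ Js)
    (hper : ∀ x ∈ Λ, ∀ m : ℕ, 1 ≤ m → f^[m] x = x → x = p)
    (hrD : ∀ x ∈ D, r x = x) (hrf : r '' (f '' D \ D) ⊆ Js)
    (n : ℕ) (hn : 1 ≤ n) :
    {x ∈ D | (r ∘ f)^[n] x = x} =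
      {p} ∪ {x ∈ iterStay f (D \ Λ) n | f^[n] x = x} := by
  have hJsD : Js ⊆ D := fun y hy => hΛD (hΛ ▸ Or.inl hy)
  have hpfix : ∀ k, f^[k] p = p := by
    intro k; induction k with
    | zero => rfl
    | succ k ih => rw [Function.iterate_succ_apply, hfp, ih]
  -- one step of r ∘ f from D
  have hstepD : ∀ y ∈ D, f y ∈ D → (r ∘ f) y = f y := by
    intro y _ h; simp [Function.comp, hrD _ h]
  have hstepJ : ∀ y ∈ D, f y ∉ D → (r ∘ f) y ∈ Js := by
    intro y hy h
    exact hrf ⟨f y, ⟨⟨y, hy, rfl⟩, h⟩, rfl⟩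
  have hDstep : ∀ y ∈ D, (r ∘ f) y ∈ D := by
    intro y hy
    by_cases h : f y ∈ D
    · rw [hstepD y hy h]; exact h
    · exact hJsD (hstepJ y hy h)
  have hDiter : ∀ k, ∀ y ∈ D, (r ∘ f)^[k] y ∈ D := by
    intro k; induction k with
    | zero => intro y hy; exact hy
    | succ k ih =>
      intro y hy
      rw [Function.iterate_succ_apply]
      exact ih _ (hDstep y hy)
  -- on Js, r ∘ f iterates agree with f iterates and stay in Js
  have hJsiter : ∀ k, ∀ y ∈ Js, (r ∘ f)^[k] y = f^[k] y ∧ f^[k] y ∈ Js := by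
    intro k; induction k with
    | zero => intro y hy; exact ⟨rfl, hy⟩
    | succ k ih =>
      intro y hy
      have hfy : f y ∈ Js := hJsinv ⟨y, hy, rfl⟩
      have h1 : (r ∘ f) y = f y := hstepD y (hJsD hy) (hJsD hfy)
      rw [Function.iterate_succ_apply, Function.iterate_succ_apply, h1]
      exact ih _ hfy
  ext x
  simp only [mem_setOf_eq, mem_union, mem_singleton_iff, iterStay, mem_diff]
  constructor
  · rintro ⟨hxD, hx⟩
    by_cases hcase : ∀ i < n, f ((r ∘ f)^[i] x) ∈ D
    · -- orbit never leaves D under f: (r∘f)^[i] x = f^[i] x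
      have heq : ∀ i ≤ n, (r ∘ f)^[i] x = f^[i] x := by
        intro i hi
        induction i with
        | zero => rfl
        | succ i ih =>
          have hi' : i ≤ n := le_of_lt (Nat.lt_of_succ_le hi)
          have ih' := ih hi'
          rw [Function.iterate_succ_apply', Function.iterate_succ_apply', ← ih']
          exact hstepD _ (hDiter i x hxD) (hcase i (Nat.lt_of_succ_le hi))
      have hfn : f^[n] x = x := by rw [← heq n le_rfl]; exact hx
      by_cases hΛcase : ∃ i, i ≤ n - 1 ∧ f^[i] x ∈ Λ
      · obtain ⟨i, hi, hiΛ⟩ := hΛcase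
        have hin : i ≤ n := le_trans hi (Nat.sub_le n 1)
        have hz : f^[n] (f^[i] x) = f^[i] x := by
          rw [← Function.iterate_add_apply, add_comm, Function.iterate_add_apply, hfn]
        have hzp : f^[i] x = p := hper _ hiΛ n hn hz
        left
        have : f^[n - i] (f^[i] x) = x := by
          rw [← Function.iterate_add_apply, Nat.sub_add_cancel hin, hfn]
        rw [hzp, hpfix] at this
        exact this.symm
      · push_neg at hΛcase
        right
        refine ⟨⟨⟨hxD, ?_⟩, ?_⟩, hfn⟩
        · have := hΛcase 0 (Nat.zero_le _)
          simpa using this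
        · intro i h1i hin1
          have hin : i ≤ n := le_trans hin1 (Nat.sub_le n 1)
          refine ⟨?_, hΛcase i hin1⟩
          rw [← heq i hin]
          exact hDiter i x hxD
    · -- orbit falls into Js
      push_neg at hcase
      obtain ⟨j, hj, hjD⟩ := hcase
      have hyJ : (r ∘ f)^[j + 1] x ∈ Js := by
        rw [Function.iterate_succ_apply']
        exact hstepJ _ (hDiter j x hxD) hjD
      have hxJ : x ∈ Js := by
        have : (r ∘ f)^[n - (j + 1)] ((r ∘ f)^[j + 1] x) = x := by
          rw [← Function.iterate_add_apply, Nat.sub_add_cancel (Nat.succ_le_of_lt hj), hx]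
        have h1 := (hJsiter (n - (j + 1)) _ hyJ).1
        have h2 := (hJsiter (n - (j + 1)) _ hyJ).2
        rw [h1] at this
        rw [this] at h2
        exact h2
      left
      have hfnx : f^[n] x = x := by rw [← (hJsiter n x hxJ).1, hx]
      exact hper x (hΛ ▸ Or.inl hxJ) n hn hfnx
  · rintro (hxp | ⟨⟨⟨⟨hxD, hxΛ⟩, hstay⟩, hfn⟩⟩)
    · rw [hxp]
      exact ⟨hJsD hp, by rw [(hJsiter n p hp).1, hpfix]⟩
    · refine ⟨hxD, ?_⟩
      have heq : ∀ i ≤ n, (r ∘ f)^[i] x = f^[i] x := by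
        intro i hi
        induction i with
        | zero => rfl
        | succ i ih =>
          have hi' : i ≤ n := le_of_lt (Nat.lt_of_succ_le hi)
          have ih' := ih hi'
          have hmem : f^[i + 1] x ∈ D := by
            rcases Nat.lt_or_ge (i + 1) n with h | h
            · exact ((hstay (i + 1) (Nat.succ_le_succ (Nat.zero_le _)) (by omega)).1)
            · have : i + 1 = n := le_antisymm hi h
              rw [this, hfn]; exact hxD
          rw [Function.iterate_succ_apply', Function.iterate_succ_apply', ih']
          exact hstepD _ (ih' ▸ hDiter i x hxD)
            (by rw [← Function.iterate_succ_apply' f i x]; exact hmem)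
      rw [heq n le_rfl, hfn]
end

section
/- The map s is continuous and is a retraction of ℝ² onto Q (s(x,y) = (x,y) for (x,y) ∈ Q and s(ℝ²) ⊆ Q). Moreover, for all real numbers 0 < λ < 1 < μ, letting T(x,y) = (λx, μy), every z ∈ ℝ² with z ≠ 0 satisfies: z ≠ T(s(z)), and the vector z − T(s(z)) does not lie in the open first quadrant {(a,b) : a > 0 and b > 0}. (The computational core of Lemma 3.1 of the paper: it implies the direction map z ↦ (z − T(s(z)))/‖z − T(s(z))‖ on a small circle about the origin omits the open first-quadrant arc of the unit circle, hence T∘s has fixed point index 0 at the origin.) -/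
open Set

/-- The closed first quadrant in the plane. -/
def Qset : Set (ℝ × ℝ) := {z | 0 ≤ z.1 ∧ 0 ≤ z.2}

/-- The retraction of the plane onto the closed first quadrant along lines of slope 1. -/
noncomputable def sret (z : ℝ × ℝ) : ℝ × ℝ :=
  if 0 ≤ z.1 ∧ 0 ≤ z.2 then z
  else if z.2 < 0 ∧ z.2 ≤ z.1 then (z.1 - z.2, 0)
  else (0, z.2 - z.1)

lemma sret_eq (z : ℝ × ℝ) :
    sret z = (z.1 - min 0 (min z.1 z.2), z.2 - min 0 (min z.1 z.2)) := by
  obtain ⟨x, y⟩ := z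
  unfold sret
  split_ifs with h1 h2
  · obtain ⟨hx, hy⟩ := h1
    have : min 0 (min x y) = 0 := by
      rw [min_eq_left]; exact le_min hx hy
    simp [this]
  · obtain ⟨hy, hyx⟩ := h2
    have : min 0 (min x y) = y := by
      rw [min_comm x y, min_eq_left hyx, min_eq_right hy.le]
    simp [this]
  · push_neg at h1 h2
    have hx : x < 0 := by
      by_contra hx
      push_neg at hx
      have hy := h1 hx
      exact absurd (h2 hy) (not_lt.2 (hy.le.trans hx))
    have hxy : x ≤ y := by
      by_contra h
      push_neg at h
      exact absurd (h2 (h.trans hx)) (not_lt.2 h.le)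
    have : min 0 (min x y) = x := by
      rw [min_eq_left hxy, min_eq_right hx.le]
    simp [this]

/-- computational core of Lemma 3.1: `s` is a continuous retraction of
`ℝ²` onto the closed first quadrant `Q`, and for `T(x,y) = (λx, μy)` with
`0 < λ < 1 < μ`, every `z ≠ 0` satisfies `z ≠ T(s z)` and `z − T(s z)` is not in the
open first quadrant. -/
theorem stmt9 :
    Continuous sret ∧ (∀ z ∈ Qset, sret z = z) ∧ (∀ z : ℝ × ℝ, sret z ∈ Qset) ∧
    ∀ lam mu : ℝ, 0 < lam → lam < 1 → 1 < mu →
      ∀ z : ℝ × ℝ, z ≠ 0 →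
        z ≠ (lam * (sret z).1, mu * (sret z).2) ∧
        ¬(0 < (z - (lam * (sret z).1, mu * (sret z).2)).1 ∧
          0 < (z - (lam * (sret z).1, mu * (sret z).2)).2) := by
  refine ⟨?_, ?_, ?_, ?_⟩
  · have heq : sret = fun z : ℝ × ℝ =>
        ((z.1 - min 0 (min z.1 z.2), z.2 - min 0 (min z.1 z.2)) : ℝ × ℝ) :=
      funext sret_eq
    rw [heq]
    exact (continuous_fst.sub
        (continuous_const.min (continuous_fst.min continuous_snd))).prodMk
      (continuous_snd.sub (continuous_const.min (continuous_fst.min continuous_snd)))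
  · intro z hz
    simp only [Qset, mem_setOf_eq] at hz
    simp [sret, hz]
  · intro z
    obtain ⟨x, y⟩ := z
    simp only [Qset, mem_setOf_eq]
    unfold sret
    split_ifs with h1 h2
    · exact h1
    · push_neg at h1
      constructor <;> simp <;> linarith [h2.1, h2.2]
    · push_neg at h1 h2
      have hx : x < 0 := by
        by_contra hx
        push_neg at hx
        have hy := h1 hx
        exact absurd (h2 hy) (not_lt.2 (hy.le.trans hx))
      have hxy : x ≤ y := by
        by_contra h
        push_neg at h
        exact absurd (h2 (h.trans hx)) (not_lt.2 h.le)
      constructor <;> simp <;> linarith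
  · intro lam mu hl hl1 hm z hz
    obtain ⟨x, y⟩ := z
    have hz' : x ≠ 0 ∨ y ≠ 0 := by
      by_contra h
      push_neg at h
      exact hz (by simp [h.1, h.2, Prod.ext_iff])
    unfold sret
    split_ifs with h1 h2
    · obtain ⟨hx, hy⟩ := h1
      constructor
      · simp only [ne_eq, Prod.mk.injEq, not_and]
        intro hx'
        intro hy'
        have hx0 : x = 0 := by nlinarith
        have hy0 : y = 0 := by nlinarith
        rcases hz' with h | h <;> exact h (by assumption)
      · rintro ⟨ha, hb⟩
        simp only [Prod.fst_sub, Prod.snd_sub] at ha hb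
        simp at ha hb
        nlinarith
    · obtain ⟨hy, hyx⟩ := h2
      constructor
      · simp only [ne_eq, Prod.mk.injEq, not_and]
        intro _ hy'
        simp at hy'
        linarith
      · rintro ⟨ha, hb⟩
        simp only [Prod.snd_sub] at hb
        simp at hb
        linarith
    · push_neg at h1 h2
      have hx : x < 0 := by
        by_contra hx
        push_neg at hx
        have hy := h1 hx
        exact absurd (h2 hy) (not_lt.2 (hy.le.trans hx))
      constructor
      · simp only [ne_eq, Prod.mk.injEq, not_and]
        intro hx'
        simp at hx'
        linarith
      · rintro ⟨ha, hb⟩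
        simp only [Prod.fst_sub] at ha
        simp at ha
        linarith
end
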